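/- Let ψ: P^{n-1} ⇢ P^{n-1} be a Cremona transformation given by an n-tuple (f₀, …, f_{n-1}) of homogeneous polynomials of degree h in the variables x₀, …, x_{n-1}. Then the linear system {f₀, …, f_{n-1}, x_n·x₀^{h-1}} defines a birational map Ψ: Pⁿ ⇢ Pⁿ whose restriction to the hyperplane (x_n = 0) is ψ, and which sends the lines through the point p = [0, …, 0, 1] to lines through a fixed point. -/

import Mathlib

/-!
Concrete framework: projective space over a field `k` as `Projectivization`,
hypersurfaces as zero loci of homogeneous polynomials, rational maps given by
tuples of homogeneous polynomials, birational maps between (closed) subvarieties,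
and Cremona equivalence of divisors.
-/

open MvPolynomial

/-- Projective `n`-space over `k`, as the projectivization of `k^{n+1}`. -/
abbrev ProjSp (k : Type) [Field k] (n : ℕ) : Type :=
  Projectivization k (Fin (n + 1) → k)

namespace ProjSp

variable (k : Type) [Field k]

/-- The zero locus in `ℙⁿ` of a (homogeneous) polynomial. -/
def zeros {n : ℕ} (f : MvPolynomial (Fin (n + 1)) k) : Set (ProjSp k n) :=
  {x | eval x.rep f = 0}

/-- `D ⊆ ℙⁿ` is an irreducible and reduced divisor (hypersurface): it is the zero
locus of an irreducible homogeneous polynomial of positive degree. -/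
def IsIrredDivisor {n : ℕ} (D : Set (ProjSp k n)) : Prop :=
  ∃ (d : ℕ) (f : MvPolynomial (Fin (n + 1)) k),
    0 < d ∧ f.IsHomogeneous d ∧ Irreducible f ∧ D = zeros k f

/-- A hyperplane in `ℙⁿ`: the zero locus of a nonzero linear form. -/
def IsHyperplane {n : ℕ} (H : Set (ProjSp k n)) : Prop :=
  ∃ f : MvPolynomial (Fin (n + 1)) k, f ≠ 0 ∧ f.IsHomogeneous 1 ∧ H = zeros k f

/-- The line through two points of `ℙⁿ` (the set of points whose representing line
lies in the plane spanned by the two points). -/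
def lineThrough {n : ℕ} (p q : ProjSp k n) : Set (ProjSp k n) :=
  {z | z.submodule ≤ p.submodule ⊔ q.submodule}

/-- `S` is a cone with vertex `p`: `p ∈ S` and `S` is a union of lines through `p`.
For an irreducible divisor of degree `d` this is equivalent to `p` being a point of
multiplicity `d` on `S`. -/
def IsConeWithVertex {n : ℕ} (S : Set (ProjSp k n)) (p : ProjSp k n) : Prop :=
  p ∈ S ∧ ∀ x ∈ S, lineThrough k p x ⊆ S

/-- The cone with vertex `p` over a set `A ⊆ ℙⁿ`: the union of the lines joining `p`
to the points of `A`. -/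
def coneOver {n : ℕ} (p : ProjSp k n) (A : Set (ProjSp k n)) : Set (ProjSp k n) :=
  ⋃ a ∈ A, lineThrough k p a

/-- The data of a rational map `ℙⁿ ⇢ ℙᵐ`: an `(m+1)`-tuple of homogeneous polynomials
of a common degree in `n+1` variables. -/
structure RatMap (n m : ℕ) where
  deg : ℕ
  comp : Fin (m + 1) → MvPolynomial (Fin (n + 1)) k
  homog : ∀ i, (comp i).IsHomogeneous deg

variable {k}

/-- The rational map is defined at `x` if not all of its components vanish at `x`. -/
def RatMap.Defined {n m : ℕ} (F : RatMap k n m) (x : ProjSp k n) : Prop :=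
  (fun i => eval x.rep (F.comp i)) ≠ 0

open scoped Classical in
/-- The value of a rational map at a point (junk value where undefined). -/
noncomputable def RatMap.app {n m : ℕ} (F : RatMap k n m) (x : ProjSp k n) :
    ProjSp k m :=
  if h : (fun i => eval x.rep (F.comp i)) ≠ 0 then Projectivization.mk k _ h
  else Classical.arbitrary _

variable (k)

/-- `F` (with inverse `G`) restricts to a birational map from `A ⊆ ℙⁿ` onto `B ⊆ ℙᵐ`:
there are hypersurface complements, each meeting `A` resp. `B`, on which `F` and `G`
are defined, map `A` into `B` (resp. `B` into `A`) and are mutually inverse.  For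
irreducible closed `A`, `B` this says exactly that `F` induces a birational map
`A ⇢ B`, i.e. that the strict transform (proper image) of `A` under `F` is `B`. -/
def IsBirationalOn {n m : ℕ} (F : RatMap k n m) (G : RatMap k m n)
    (A : Set (ProjSp k n)) (B : Set (ProjSp k m)) : Prop :=
  ∃ (u : MvPolynomial (Fin (n + 1)) k) (v : MvPolynomial (Fin (m + 1)) k)
    (du dv : ℕ), u.IsHomogeneous du ∧ v.IsHomogeneous dv ∧
    ¬ A ⊆ zeros k u ∧ ¬ B ⊆ zeros k v ∧
    (∀ x ∈ A \ zeros k u,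
      F.Defined x ∧ F.app x ∈ B ∧ G.Defined (F.app x) ∧ G.app (F.app x) = x) ∧
    (∀ y ∈ B \ zeros k v,
      G.Defined y ∧ G.app y ∈ A ∧ F.Defined (G.app y) ∧ F.app (G.app y) = y)

/-- `A ⊆ ℙⁿ` and `B ⊆ ℙᵐ` are birational (as abstract varieties). -/
def Birational {n m : ℕ} (A : Set (ProjSp k n)) (B : Set (ProjSp k m)) : Prop :=
  ∃ (F : RatMap k n m) (G : RatMap k m n), IsBirationalOn k F G A B

/-- Two divisors `D, D' ⊆ ℙⁿ` are Cremona equivalent: there is a birational self-map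
`Φ` of `ℙⁿ` (a Cremona transformation) whose strict transform of `D` is `D'`,
i.e. `Φ` restricts to a birational map from `D` onto `D'`. -/
def CremonaEquivalent {n : ℕ} (D D' : Set (ProjSp k n)) : Prop :=
  ∃ (F : RatMap k n n) (G : RatMap k n n),
    IsBirationalOn k F G Set.univ Set.univ ∧ IsBirationalOn k F G D D'

/-- `C` is a rational variety: it is birational to some projective space. -/
def IsRationalVariety {n : ℕ} (C : Set (ProjSp k n)) : Prop :=
  ∃ m : ℕ, Birational k C (Set.univ : Set (ProjSp k m))

end ProjSp

open ProjSp

/-- The linear embedding `k^{m+1} → k^{m+2}` appending a last coordinate `0`. -/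
def extendZeroLinear (k : Type) [Field k] (m : ℕ) :
    (Fin (m + 1) → k) →ₗ[k] (Fin (m + 2) → k) where
  toFun v := Fin.snoc v 0
  map_add' u v := by
    funext i
    refine Fin.lastCases ?_ (fun j => ?_) i <;> simp
  map_smul' c v := by
    funext i
    refine Fin.lastCases ?_ (fun j => ?_) i <;> simp

lemma extendZeroLinear_injective (k : Type) [Field k] (m : ℕ) :
    Function.Injective (extendZeroLinear k m) := by
  intro u v h
  funext j
  have := congrFun h j.castSucc
  simpa [extendZeroLinear] using this

/-- The embedding of `ℙᵐ` into `ℙ^{m+1}` as the hyperplane `(x_{m+1} = 0)`. -/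
noncomputable def hyperplaneEmbedding (k : Type) [Field k] (m : ℕ) :
    ProjSp k m → ProjSp k (m + 1) :=
  Projectivization.map (extendZeroLinear k m) (extendZeroLinear_injective k m)

/-- Given the data `(f₀, …, f_m)` of a Cremona transformation of `ℙᵐ` of degree `h`,
the rational map `Ψ : ℙ^{m+1} ⇢ ℙ^{m+1}` given by the linear system
`{f₀, …, f_m, x_{m+1}·x₀^{h-1}}`. -/
noncomputable def coneExtension {k : Type} [Field k] {m : ℕ}
    (F : RatMap k m m) (h1 : 1 ≤ F.deg) : RatMap k (m + 1) (m + 1) where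
  deg := F.deg
  comp := Fin.lastCases
    (MvPolynomial.X (Fin.last (m + 1)) * MvPolynomial.X (0 : Fin (m + 2)) ^ (F.deg - 1))
    (fun j => MvPolynomial.rename (Fin.castSucc) (F.comp j))
  homog := by
    intro i
    refine Fin.lastCases ?_ (fun j => ?_) i
    · try dsimp only
      rw [Fin.lastCases_last]
      have h2 : 1 + 1 * (F.deg - 1) = F.deg := by omega
      have := (MvPolynomial.isHomogeneous_X k (Fin.last (m + 1))).mul
        ((MvPolynomial.isHomogeneous_X k (0 : Fin (m + 2))).pow (F.deg - 1))
      rwa [h2] at this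
    · try dsimp only
      rw [Fin.lastCases_castSucc]
      exact (F.homog j).rename_isHomogeneous

/-- The point `p = [0, …, 0, 1] ∈ ℙ^{m+1}`. -/
noncomputable def lastCoordPoint (k : Type) [Field k] (m : ℕ) : ProjSp k (m + 1) :=
  Projectivization.mk k (Pi.single (Fin.last (m + 1)) 1)
    (by simp [Pi.single_eq_same, Function.ne_iff]; try exact ⟨Fin.last (m + 1), by simp⟩)

/-! ### Auxiliary lemmas -/

namespace ProjSp

open MvPolynomial Projectivization

variable {k : Type} [Field k]

lemma eval_smul_homog {N d : ℕ} {f : MvPolynomial (Fin N) k} (hf : f.IsHomogeneous d)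
    (c : k) (v : Fin N → k) : eval (c • v) f = c ^ d * eval v f := by
  rw [eval_eq, eval_eq, Finset.mul_sum]
  refine Finset.sum_congr rfl fun x hx => ?_
  have hdeg : Finsupp.weight 1 x = d := hf (mem_support_iff.mp hx)
  simp only [Pi.smul_apply, smul_eq_mul, mul_pow]
  rw [Finset.prod_mul_distrib, Finset.prod_pow_eq_pow_sum]
  have : ∑ i ∈ x.support, x i = d := by
    rw [← hdeg, Finsupp.weight_apply]; simp [Finsupp.sum]
  rw [this]; ring

lemma eval_aeval' {n m : ℕ} (w : Fin (m + 1) → k) (g : Fin (n + 1) → MvPolynomial (Fin (m + 1)) k)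
    (p : MvPolynomial (Fin (n + 1)) k) :
    eval w (aeval g p) = eval (fun i => eval w (g i)) p := by
  rw [aeval_eq_bind₁]
  simp only [eval, eval₂Hom_bind₁]

/-- The vector of values of the components of a rational map. -/
noncomputable def evalVec {n m : ℕ} (F : RatMap k n m) (v : Fin (n + 1) → k) : Fin (m + 1) → k :=
  fun i => eval v (F.comp i)

lemma evalVec_smul {n m : ℕ} (F : RatMap k n m) (c : k) (v : Fin (n + 1) → k) :
    evalVec F (c • v) = (c ^ F.deg) • evalVec F v := by
  funext i
  simp [evalVec, eval_smul_homog (F.homog i)]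

lemma rep_mk_eq {n : ℕ} (v : Fin (n + 1) → k) (hv : v ≠ 0) :
    ∃ c : kˣ, (Projectivization.mk k v hv).rep = (c : k) • v := by
  obtain ⟨a, ha⟩ := exists_smul_eq_mk_rep k v hv
  exact ⟨a, ha.symm⟩

lemma mk_smul_eq {n : ℕ} (v : Fin (n + 1) → k) (hv : v ≠ 0) {c : k} (hc : c ≠ 0)
    (hcv : c • v ≠ 0) : Projectivization.mk k (c • v) hcv = Projectivization.mk k v hv := by
  rw [mk_eq_mk_iff]
  exact ⟨Units.mk0 c hc, rfl⟩

lemma defined_mk {n m : ℕ} (F : RatMap k n m) {v : Fin (n + 1) → k} (hv : v ≠ 0) :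
    F.Defined (Projectivization.mk k v hv) ↔ evalVec F v ≠ 0 := by
  obtain ⟨c, hc⟩ := rep_mk_eq v hv
  have : (fun i => eval (Projectivization.mk k v hv).rep (F.comp i)) =
      (c : k) ^ F.deg • evalVec F v := by
    funext i
    simp [hc, evalVec, eval_smul_homog (F.homog i)]
  rw [RatMap.Defined, this]
  constructor
  · intro h h0; exact h (by simp [h0])
  · intro h h0
    apply h
    have := congrArg (((c : k) ^ F.deg)⁻¹ • ·) h0
    simpa [smul_smul, inv_mul_cancel₀ (pow_ne_zero F.deg c.ne_zero)] using this

lemma app_mk {n m : ℕ} (F : RatMap k n m) {v : Fin (n + 1) → k} (hv : v ≠ 0)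
    (hw : evalVec F v ≠ 0) :
    F.app (Projectivization.mk k v hv) = Projectivization.mk k (evalVec F v) hw := by
  have hd : F.Defined (Projectivization.mk k v hv) := (defined_mk F hv).mpr hw
  obtain ⟨c, hc⟩ := rep_mk_eq v hv
  have hvec : (fun i => eval (Projectivization.mk k v hv).rep (F.comp i)) =
      (c : k) ^ F.deg • evalVec F v := by
    funext i
    simp [hc, evalVec, eval_smul_homog (F.homog i)]
  have h1 : ((c : k) ^ F.deg) • evalVec F v ≠ 0 := by
    rw [← hvec]; exact hd
  rw [RatMap.app, dif_pos (show (fun i => eval (Projectivization.mk k v hv).rep (F.comp i)) ≠ 0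
    from hd)]
  rw [show Projectivization.mk k (fun i => eval (Projectivization.mk k v hv).rep (F.comp i)) hd
      = Projectivization.mk k (((c : k) ^ F.deg) • evalVec F v) h1 from by congr 1]
  exact mk_smul_eq _ hw (pow_ne_zero F.deg c.ne_zero) h1

lemma app_eq_mk_evalVec_rep {n m : ℕ} (F : RatMap k n m) (x : ProjSp k n)
    (hd : F.Defined x) : F.app x = Projectivization.mk k (evalVec F x.rep) hd := by
  rw [RatMap.app, dif_pos (show (fun i => eval x.rep (F.comp i)) ≠ 0 from hd)]
  rfl

end ProjSp

namespace ProjSp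

open MvPolynomial Projectivization

variable {k : Type} [Field k]

omit [Field k] in
lemma snoc_zero' {n : ℕ} (v : Fin (n + 1) → k) (t : k) :
    (Fin.snoc v t : Fin (n + 2) → k) 0 = v 0 := by
  have : (0 : Fin (n + 2)) = Fin.castSucc 0 := rfl
  rw [this, Fin.snoc_castSucc]

lemma snoc_eq_zero_iff {n : ℕ} {v : Fin (n + 1) → k} {t : k} :
    (Fin.snoc v t : Fin (n + 2) → k) = 0 ↔ v = 0 ∧ t = 0 := by
  constructor
  · intro h
    constructor
    · funext j
      have := congrFun h (Fin.castSucc j)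
      simpa using this
    · have := congrFun h (Fin.last (n + 1))
      simpa using this
  · rintro ⟨rfl, rfl⟩
    funext i
    refine Fin.lastCases ?_ (fun j => ?_) i <;> simp

omit [Field k] in
lemma snoc_comp_castSucc {n : ℕ} (v : Fin (n + 1) → k) (t : k) :
    (Fin.snoc v t : Fin (n + 2) → k) ∘ Fin.castSucc = v := by
  funext j; simp

lemma smul_snoc {n : ℕ} (c : k) (v : Fin (n + 1) → k) (t : k) :
    c • (Fin.snoc v t : Fin (n + 2) → k) = Fin.snoc (c • v) (c * t) := by
  funext i
  refine Fin.lastCases ?_ (fun j => ?_) i <;> simp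

lemma evalVec_coneExtension {m : ℕ} (F : RatMap k m m) (h1 : 1 ≤ F.deg)
    (v : Fin (m + 1) → k) (t : k) :
    evalVec (coneExtension F h1) (Fin.snoc v t) =
      Fin.snoc (evalVec F v) (t * v 0 ^ (F.deg - 1)) := by
  funext i
  refine Fin.lastCases ?_ (fun j => ?_) i
  · rw [Fin.snoc_last]
    show eval (Fin.snoc v t) ((coneExtension F h1).comp (Fin.last (m + 1))) = _
    have hc : (coneExtension F h1).comp (Fin.last (m + 1)) =
        MvPolynomial.X (Fin.last (m + 1)) * MvPolynomial.X (0 : Fin (m + 2)) ^ (F.deg - 1) := by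
      show (Fin.lastCases _ _ (Fin.last (m + 1)) : MvPolynomial (Fin (m + 2)) k) = _
      rw [Fin.lastCases_last]
    rw [hc]
    simp [snoc_zero' v t]
  · rw [Fin.snoc_castSucc]
    show eval (Fin.snoc v t) ((coneExtension F h1).comp (Fin.castSucc j)) = _
    have hc : (coneExtension F h1).comp (Fin.castSucc j) =
        MvPolynomial.rename Fin.castSucc (F.comp j) := by
      show (Fin.lastCases _ _ (Fin.castSucc j) : MvPolynomial (Fin (m + 2)) k) = _
      rw [Fin.lastCases_castSucc]
    rw [hc]
    rw [eval_rename, snoc_comp_castSucc]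
    rfl

/-- The inverse linear system for `coneExtension F`:
`(y₀·g₀·g₀^{h-1}, …, y₀·g_m·g₀^{h-1}, y_{m+1}·(f₀∘G))`. -/
noncomputable def coneInverse {m : ℕ} (F G : RatMap k m m) (h1 : 1 ≤ F.deg) :
    RatMap k (m + 1) (m + 1) where
  deg := F.deg * G.deg + 1
  comp := Fin.lastCases
    (MvPolynomial.X (Fin.last (m + 1)) *
      MvPolynomial.rename Fin.castSucc (aeval G.comp (F.comp 0)))
    (fun j => MvPolynomial.X (0 : Fin (m + 2)) *
      MvPolynomial.rename Fin.castSucc (G.comp j * (G.comp 0) ^ (F.deg - 1)))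
  homog := by
    intro i
    refine Fin.lastCases ?_ (fun j => ?_) i
    · rw [Fin.lastCases_last]
      have h2 : ((F.comp 0).aeval G.comp).IsHomogeneous (G.deg * F.deg) :=
        (F.homog 0).aeval G.comp (fun i => G.homog i)
      have := (MvPolynomial.isHomogeneous_X k (Fin.last (m + 1))).mul
        (h2.rename_isHomogeneous (f := Fin.castSucc))
      rwa [show 1 + G.deg * F.deg = F.deg * G.deg + 1 by ring] at this
    · rw [Fin.lastCases_castSucc]
      have h2 : (G.comp j * (G.comp 0) ^ (F.deg - 1)).IsHomogeneous
          (G.deg + G.deg * (F.deg - 1)) :=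
        (G.homog j).mul ((G.homog 0).pow (F.deg - 1))
      have := (MvPolynomial.isHomogeneous_X k (0 : Fin (m + 2))).mul
        (h2.rename_isHomogeneous (f := Fin.castSucc))
      rwa [show 1 + (G.deg + G.deg * (F.deg - 1)) = F.deg * G.deg + 1 by
        obtain ⟨c, hc⟩ := Nat.exists_eq_add_of_le h1
        rw [hc, Nat.add_sub_cancel_left]; ring] at this

lemma evalVec_coneInverse {m : ℕ} (F G : RatMap k m m) (h1 : 1 ≤ F.deg)
    (w : Fin (m + 1) → k) (t : k) :
    evalVec (coneInverse F G h1) (Fin.snoc w t) =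
      Fin.snoc (fun j => w 0 * (evalVec G w j * evalVec G w 0 ^ (F.deg - 1)))
        (t * eval (evalVec G w) (F.comp 0)) := by
  funext i
  refine Fin.lastCases ?_ (fun j => ?_) i
  · rw [Fin.snoc_last]
    show eval (Fin.snoc w t) ((coneInverse F G h1).comp (Fin.last (m + 1))) = _
    have hc : (coneInverse F G h1).comp (Fin.last (m + 1)) =
        MvPolynomial.X (Fin.last (m + 1)) *
          MvPolynomial.rename Fin.castSucc (aeval G.comp (F.comp 0)) := by
      show (Fin.lastCases _ _ (Fin.last (m + 1)) : MvPolynomial (Fin (m + 2)) k) = _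
      rw [Fin.lastCases_last]
    rw [hc]
    rw [map_mul, eval_X, Fin.snoc_last, eval_rename, snoc_comp_castSucc, eval_aeval']
    rfl
  · rw [Fin.snoc_castSucc]
    show eval (Fin.snoc w t) ((coneInverse F G h1).comp (Fin.castSucc j)) = _
    have hc : (coneInverse F G h1).comp (Fin.castSucc j) =
        MvPolynomial.X (0 : Fin (m + 2)) *
          MvPolynomial.rename Fin.castSucc (G.comp j * (G.comp 0) ^ (F.deg - 1)) := by
      show (Fin.lastCases _ _ (Fin.castSucc j) : MvPolynomial (Fin (m + 2)) k) = _
      rw [Fin.lastCases_castSucc]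
    rw [hc]
    rw [map_mul, eval_X, snoc_zero', eval_rename, snoc_comp_castSucc, map_mul, map_pow]
    rfl

end ProjSp

namespace ProjSp

open MvPolynomial Projectivization

variable {k : Type} [Field k]

lemma exists_point_eval_ne_zero [Infinite k] {n d : ℕ} {f : MvPolynomial (Fin (n + 1)) k}
    (hf : f.IsHomogeneous d) (hd : 0 < d) (h0 : f ≠ 0) :
    ∃ (v : Fin (n + 1) → k) (_ : v ≠ 0), eval v f ≠ 0 := by
  obtain ⟨v, hv⟩ : ∃ v, eval v f ≠ 0 := by
    by_contra h
    push_neg at h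
    exact h0 (hf.eq_zero_of_forall_eval_eq_zero h)
  refine ⟨v, ?_, hv⟩
  rintro rfl
  apply hv
  have h2 := eval_smul_homog hf 0 (0 : Fin (n + 1) → k)
  rw [zero_pow hd.ne', zero_mul, zero_smul] at h2
  exact h2

lemma mk_not_mem_zeros {n d : ℕ} {f : MvPolynomial (Fin (n + 1)) k} (hf : f.IsHomogeneous d)
    {v : Fin (n + 1) → k} (hv : v ≠ 0) (he : eval v f ≠ 0) :
    Projectivization.mk k v hv ∉ zeros k f := by
  intro hmem
  obtain ⟨c, hc⟩ := rep_mk_eq v hv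
  have h2 : eval (Projectivization.mk k v hv).rep f = 0 := hmem
  rw [hc, eval_smul_homog hf] at h2
  rcases mul_eq_zero.mp h2 with h | h
  · exact pow_ne_zero _ c.ne_zero h
  · exact he h

lemma not_subset_zeros [Infinite k] {n d : ℕ} {f : MvPolynomial (Fin (n + 1)) k}
    (hf : f.IsHomogeneous d) (hd : 0 < d) (h0 : f ≠ 0) :
    ¬ (Set.univ : Set (ProjSp k n)) ⊆ zeros k f := by
  obtain ⟨v, hv, he⟩ := exists_point_eval_ne_zero hf hd h0
  intro hsub
  exact mk_not_mem_zeros hf hv he (hsub (Set.mem_univ _))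

lemma ne_zero_of_not_subset_zeros {n : ℕ} {A : Set (ProjSp k n)}
    {f : MvPolynomial (Fin (n + 1)) k} (h : ¬ A ⊆ zeros k f) : f ≠ 0 := by
  rintro rfl
  exact h (fun x _ => by simp [zeros])

lemma eval_snoc_mul {n : ℕ} (p : MvPolynomial (Fin (n + 1)) k) (vv : Fin (n + 1) → k) (tt : k) :
    eval (Fin.snoc vv tt) (MvPolynomial.X (0 : Fin (n + 2)) * MvPolynomial.rename Fin.castSucc p)
      = vv 0 * eval vv p := by
  rw [map_mul, eval_X, snoc_zero', eval_rename, snoc_comp_castSucc]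

/-- The key extraction: a birational pair has nonvanishing zeroth component
(of the "forward" map appearing in the second bullet). -/
lemma comp_zero_ne_zero [Infinite k] {n : ℕ} {F G : RatMap k n n}
    {v : MvPolynomial (Fin (n + 1)) k} {dv : ℕ} (hv : v.IsHomogeneous dv) (hvne : v ≠ 0)
    (hbwd : ∀ y ∈ (Set.univ : Set (ProjSp k n)) \ zeros k v,
      G.Defined y ∧ G.app y ∈ (Set.univ : Set (ProjSp k n)) ∧ F.Defined (G.app y) ∧
        F.app (G.app y) = y) :
    F.comp 0 ≠ 0 := by
  have hP : (v * MvPolynomial.X 0).IsHomogeneous (dv + 1) := hv.mul (isHomogeneous_X k 0)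
  have hPne : v * MvPolynomial.X 0 ≠ 0 :=
    mul_ne_zero hvne (MvPolynomial.X_ne_zero 0)
  obtain ⟨w, hw, he⟩ := exists_point_eval_ne_zero hP (Nat.succ_pos dv) hPne
  rw [map_mul, eval_X] at he
  have hev : eval w v ≠ 0 := fun h => he (by rw [h, zero_mul])
  have hw0 : w 0 ≠ 0 := fun h => he (by rw [h, mul_zero])
  obtain ⟨hGd, -, hFd, heq⟩ := hbwd (Projectivization.mk k w hw)
    ⟨Set.mem_univ _, mk_not_mem_zeros hv hw hev⟩
  have hr : evalVec G w ≠ 0 := (defined_mk G hw).mp hGd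
  rw [app_mk G hw hr] at hFd heq
  have hs : evalVec F (evalVec G w) ≠ 0 := (defined_mk F hr).mp hFd
  rw [app_mk F hr hs] at heq
  obtain ⟨b, hb⟩ := (mk_eq_mk_iff k _ _ _ _).mp heq
  intro hF0
  have h2 := congrFun hb 0
  have h3 : evalVec F (evalVec G w) 0 = 0 := by
    show eval _ (F.comp 0) = 0
    rw [hF0, map_zero]
  rw [h3, Units.smul_def, Pi.smul_apply, smul_eq_mul] at h2
  exact hw0 ((mul_eq_zero.mp h2).resolve_left b.ne_zero)

end ProjSp

namespace ProjSp

open MvPolynomial Projectivization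

variable {k : Type} [Field k]

lemma mk_congr {n : ℕ} {v w : Fin (n + 1) → k} (h : v = w) (hv : v ≠ 0) :
    Projectivization.mk k v hv = Projectivization.mk k w (h ▸ hv) := by subst h; rfl

lemma rename_castSucc_ne_zero {n : ℕ} {p : MvPolynomial (Fin (n + 1)) k} (hp : p ≠ 0) :
    MvPolynomial.rename (Fin.castSucc : Fin (n + 1) → Fin (n + 2)) p ≠ 0 := by
  intro h
  apply hp
  apply MvPolynomial.rename_injective (Fin.castSucc : Fin (n + 1) → Fin (n + 2))
    (Fin.castSucc_injective _)
  simpa using h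

end ProjSp

open MvPolynomial Projectivization

/-- proof of Proposition `pro:easy`.
Let `ψ : ℙᵐ ⇢ ℙᵐ` (`m = n-1`) be a Cremona transformation given by the tuple
`(f₀, …, f_m)` of homogeneous polynomials of degree `h ≥ 1` in `x₀, …, x_m`.  Then
the linear system `{f₀, …, f_m, x_{m+1}·x₀^{h-1}}` defines a birational map
`Ψ : ℙ^{m+1} ⇢ ℙ^{m+1}` whose restriction to the hyperplane `(x_{m+1} = 0) ≅ ℙᵐ`
is `ψ`, and which sends the lines through the point `p = [0, …, 0, 1]` to lines
through a fixed point. -/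
theorem coneExtension_birational_restricts_and_maps_lines
    (k : Type) [Field k] [IsAlgClosed k] [CharZero k] (m : ℕ)
    (F G : RatMap k m m) (h1 : 1 ≤ F.deg)
    (hcrem : IsBirationalOn k F G (Set.univ : Set (ProjSp k m)) Set.univ) :
    -- `Ψ` is a birational self-map of `ℙ^{m+1}`:
    (∃ G' : RatMap k (m + 1) (m + 1),
        IsBirationalOn k (coneExtension F h1) G'
          (Set.univ : Set (ProjSp k (m + 1))) Set.univ) ∧
    -- the restriction of `Ψ` to the hyperplane `(x_{m+1} = 0)` is `ψ`:
    (∀ x : ProjSp k m, F.Defined x →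
        (coneExtension F h1).Defined (hyperplaneEmbedding k m x) ∧
        (coneExtension F h1).app (hyperplaneEmbedding k m x) =
          hyperplaneEmbedding k m (F.app x)) ∧
    -- `Ψ` sends the lines through `p = [0,…,0,1]` to lines through a fixed point:
    (∃ q : ProjSp k (m + 1), ∀ x : ProjSp k (m + 1), x ≠ lastCoordPoint k m →
        ∃ y : ProjSp k (m + 1), y ≠ q ∧
          ∀ z ∈ lineThrough k (lastCoordPoint k m) x, (coneExtension F h1).Defined z →
            (coneExtension F h1).app z ∈ lineThrough k q y) := by
  refine ⟨?_, ?_, ?_⟩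
  · -- Part 1: Ψ is birational with inverse the coneInverse
    obtain ⟨u, v, du, dv, hu, hv, hAu, hBv, hfwd, hbwd⟩ := hcrem
    have hune : u ≠ 0 := ne_zero_of_not_subset_zeros hAu
    have hvne : v ≠ 0 := ne_zero_of_not_subset_zeros hBv
    have hF0 : F.comp 0 ≠ 0 := comp_zero_ne_zero hv hvne hbwd
    have hG0 : G.comp 0 ≠ 0 := comp_zero_ne_zero hu hune hfwd
    refine ⟨coneInverse F G h1,
      MvPolynomial.X 0 * MvPolynomial.rename Fin.castSucc (u * F.comp 0),
      MvPolynomial.X 0 * MvPolynomial.rename Fin.castSucc (v * G.comp 0),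
      1 + (du + F.deg), 1 + (dv + G.deg),
      (isHomogeneous_X k 0).mul ((hu.mul (F.homog 0)).rename_isHomogeneous (f := Fin.castSucc)),
      (isHomogeneous_X k 0).mul ((hv.mul (G.homog 0)).rename_isHomogeneous (f := Fin.castSucc)),
      not_subset_zeros ((isHomogeneous_X k 0).mul
        ((hu.mul (F.homog 0)).rename_isHomogeneous (f := Fin.castSucc))) (by omega)
        (mul_ne_zero (MvPolynomial.X_ne_zero 0)
          (rename_castSucc_ne_zero (mul_ne_zero hune hF0))),
      not_subset_zeros ((isHomogeneous_X k 0).mul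
        ((hv.mul (G.homog 0)).rename_isHomogeneous (f := Fin.castSucc))) (by omega)
        (mul_ne_zero (MvPolynomial.X_ne_zero 0)
          (rename_castSucc_ne_zero (mul_ne_zero hvne hG0))),
      ?_, ?_⟩
    · -- forward: G' ∘ Ψ = id off a hypersurface
      rintro x ⟨-, hxz⟩
      have hxz' : eval x.rep (MvPolynomial.X 0 *
          MvPolynomial.rename Fin.castSucc (u * F.comp 0)) ≠ 0 := hxz
      obtain ⟨vv, tt, hsnoc⟩ : ∃ vv tt, Fin.snoc vv tt = x.rep :=
        ⟨_, _, Fin.snoc_init_self x.rep⟩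
      rw [← hsnoc, eval_snoc_mul, map_mul] at hxz'
      simp only [ne_eq, mul_eq_zero, not_or] at hxz'
      have hvv0 := hxz'.1
      have hevu := hxz'.2.1
      have hevf0 := hxz'.2.2
      have hvvne : vv ≠ 0 := fun h => hvv0 (by rw [h]; rfl)
      obtain ⟨hFd, -, hGd, heq⟩ := hfwd (Projectivization.mk k vv hvvne)
        ⟨Set.mem_univ _, mk_not_mem_zeros hu hvvne hevu⟩
      have hw : evalVec F vv ≠ 0 := (defined_mk F hvvne).mp hFd
      rw [app_mk F hvvne hw] at hGd heq
      have hr : evalVec G (evalVec F vv) ≠ 0 := (defined_mk G hw).mp hGd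
      rw [app_mk G hw hr] at heq
      obtain ⟨a, ha⟩ := (mk_eq_mk_iff k _ _ _ _).mp heq
      have ha' : (a : k) • vv = evalVec G (evalVec F vv) := by
        rw [← Units.smul_def]; exact ha
      have hw0 : evalVec F vv 0 ≠ 0 := hevf0
      obtain ⟨e, he⟩ : ∃ e, F.deg = e + 1 := ⟨F.deg - 1, by omega⟩
      -- the value of Ψ at x
      have hW : evalVec (coneExtension F h1) x.rep =
          Fin.snoc (evalVec F vv) (tt * vv 0 ^ (F.deg - 1)) := by
        rw [← hsnoc, evalVec_coneExtension]
      have hWne : (Fin.snoc (evalVec F vv) (tt * vv 0 ^ (F.deg - 1)) : Fin (m + 2) → k) ≠ 0 :=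
        fun h0 => hw (snoc_eq_zero_iff.mp h0).1
      have hΨd : (coneExtension F h1).Defined x := by
        show evalVec (coneExtension F h1) x.rep ≠ 0
        rw [hW]; exact hWne
      have hΨd' : evalVec (coneExtension F h1) x.rep ≠ 0 := hΨd
      have happ : (coneExtension F h1).app x =
          Projectivization.mk k (evalVec (coneExtension F h1) x.rep) hΨd' :=
        app_eq_mk_evalVec_rep _ x hΨd'
      -- the value of G' at Ψ(x)
      have hCval : evalVec (coneInverse F G h1) (evalVec (coneExtension F h1) x.rep) =
          (evalVec F vv 0 * ((a : k) ^ F.deg * vv 0 ^ (F.deg - 1))) • x.rep := by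
        rw [hW, evalVec_coneInverse, ← hsnoc, smul_snoc]
        funext i
        refine Fin.lastCases ?_ (fun j => ?_) i
        · rw [Fin.snoc_last, Fin.snoc_last, ← ha', eval_smul_homog (F.homog 0)]
          have h00 : eval vv (F.comp 0) = evalVec F vv 0 := rfl
          rw [h00]
          ring
        · rw [Fin.snoc_castSucc, Fin.snoc_castSucc, ← ha']
          simp only [Pi.smul_apply, smul_eq_mul]
          rw [he, Nat.add_sub_cancel]
          ring
      have hCne : evalVec F vv 0 * ((a : k) ^ F.deg * vv 0 ^ (F.deg - 1)) ≠ 0 :=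
        mul_ne_zero hw0 (mul_ne_zero (pow_ne_zero _ a.ne_zero) (pow_ne_zero _ hvv0))
      have hCsne : (evalVec F vv 0 * ((a : k) ^ F.deg * vv 0 ^ (F.deg - 1))) • x.rep ≠ 0 :=
        smul_ne_zero hCne (rep_nonzero x)
      have h5 : evalVec (coneInverse F G h1) (evalVec (coneExtension F h1) x.rep) ≠ 0 := by
        rw [hCval]; exact hCsne
      refine ⟨hΨd, Set.mem_univ _, ?_, ?_⟩
      · rw [happ]
        exact (defined_mk _ _).mpr h5
      · rw [happ, app_mk _ _ h5]
        exact (mk_congr hCval _).trans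
          ((mk_smul_eq x.rep (rep_nonzero x) hCne _).trans (Projectivization.mk_rep x))
    · -- backward: Ψ ∘ G' = id off a hypersurface
      rintro y ⟨-, hyz⟩
      have hyz' : eval y.rep (MvPolynomial.X 0 *
          MvPolynomial.rename Fin.castSucc (v * G.comp 0)) ≠ 0 := hyz
      obtain ⟨ww, tt, hsnoc⟩ : ∃ ww tt, Fin.snoc ww tt = y.rep :=
        ⟨_, _, Fin.snoc_init_self y.rep⟩
      rw [← hsnoc, eval_snoc_mul, map_mul] at hyz'
      simp only [ne_eq, mul_eq_zero, not_or] at hyz'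
      have hww0 := hyz'.1
      have hevv := hyz'.2.1
      have hevg0 := hyz'.2.2
      have hwwne : ww ≠ 0 := fun h => hww0 (by rw [h]; rfl)
      obtain ⟨hGd, -, hFd, heq⟩ := hbwd (Projectivization.mk k ww hwwne)
        ⟨Set.mem_univ _, mk_not_mem_zeros hv hwwne hevv⟩
      have hr : evalVec G ww ≠ 0 := (defined_mk G hwwne).mp hGd
      rw [app_mk G hwwne hr] at hFd heq
      have hs : evalVec F (evalVec G ww) ≠ 0 := (defined_mk F hr).mp hFd
      rw [app_mk F hr hs] at heq
      obtain ⟨b, hb⟩ := (mk_eq_mk_iff k _ _ _ _).mp heq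
      have hb' : (b : k) • ww = evalVec F (evalVec G ww) := by
        rw [← Units.smul_def]; exact hb
      have hr0 : evalVec G ww 0 ≠ 0 := hevg0
      obtain ⟨e, he⟩ : ∃ e, F.deg = e + 1 := ⟨F.deg - 1, by omega⟩
      -- the value of G' at y
      have hev : eval (evalVec G ww) (F.comp 0) = (b : k) * ww 0 := by
        have h2 := congrFun hb' 0
        rw [Pi.smul_apply, smul_eq_mul] at h2
        exact h2.symm
      have hV1 : evalVec (coneInverse F G h1) y.rep =
          Fin.snoc ((ww 0 * evalVec G ww 0 ^ (F.deg - 1)) • evalVec G ww)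
            (tt * ((b : k) * ww 0)) := by
        rw [← hsnoc, evalVec_coneInverse]
        funext i
        refine Fin.lastCases ?_ (fun j => ?_) i
        · rw [Fin.snoc_last, Fin.snoc_last, hev]
        · rw [Fin.snoc_castSucc, Fin.snoc_castSucc]
          simp only [Pi.smul_apply, smul_eq_mul]
          ring
      have hV1ne : (Fin.snoc ((ww 0 * evalVec G ww 0 ^ (F.deg - 1)) • evalVec G ww)
          (tt * ((b : k) * ww 0)) : Fin (m + 2) → k) ≠ 0 := by
        intro h0
        have h2 := congrFun (snoc_eq_zero_iff.mp h0).1 0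
        rw [Pi.smul_apply, smul_eq_mul] at h2
        exact (mul_ne_zero (mul_ne_zero hww0 (pow_ne_zero _ hr0)) hr0) h2
      have hG'd : (coneInverse F G h1).Defined y := by
        show evalVec (coneInverse F G h1) y.rep ≠ 0
        rw [hV1]; exact hV1ne
      have hG'd' : evalVec (coneInverse F G h1) y.rep ≠ 0 := hG'd
      have happ : (coneInverse F G h1).app y =
          Projectivization.mk k (evalVec (coneInverse F G h1) y.rep) hG'd' :=
        app_eq_mk_evalVec_rep _ y hG'd'
      -- value of Ψ at G'(y)
      have hDval : evalVec (coneExtension F h1) (evalVec (coneInverse F G h1) y.rep) =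
          ((b : k) * ww 0 ^ F.deg * evalVec G ww 0 ^ ((F.deg - 1) * F.deg)) • y.rep := by
        rw [hV1, evalVec_coneExtension, ← hsnoc, smul_snoc, evalVec_smul, ← hb']
        funext i
        refine Fin.lastCases ?_ (fun j => ?_) i
        · rw [Fin.snoc_last, Fin.snoc_last]
          simp only [Pi.smul_apply, smul_eq_mul]
          rw [he, Nat.add_sub_cancel]
          ring
        · rw [Fin.snoc_castSucc, Fin.snoc_castSucc]
          simp only [Pi.smul_apply, smul_eq_mul]
          rw [he, Nat.add_sub_cancel]
          ring
      have hDne : (b : k) * ww 0 ^ F.deg * evalVec G ww 0 ^ ((F.deg - 1) * F.deg) ≠ 0 :=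
        mul_ne_zero (mul_ne_zero b.ne_zero (pow_ne_zero _ hww0)) (pow_ne_zero _ hr0)
      have hDsne : ((b : k) * ww 0 ^ F.deg * evalVec G ww 0 ^ ((F.deg - 1) * F.deg)) • y.rep
          ≠ 0 := smul_ne_zero hDne (rep_nonzero y)
      have h5 : evalVec (coneExtension F h1) (evalVec (coneInverse F G h1) y.rep) ≠ 0 := by
        rw [hDval]; exact hDsne
      refine ⟨hG'd, Set.mem_univ _, ?_, ?_⟩
      · rw [happ]
        exact (defined_mk _ _).mpr h5
      · rw [happ, app_mk _ _ h5]
        exact (mk_congr hDval _).trans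
          ((mk_smul_eq y.rep (rep_nonzero y) hDne _).trans (Projectivization.mk_rep y))
  · -- Part 2: restriction to the hyperplane
    intro x hx
    have hρ : x.rep ≠ 0 := Projectivization.rep_nonzero x
    have hsne : (Fin.snoc x.rep 0 : Fin (m + 2) → k) ≠ 0 :=
      fun h => hρ (snoc_eq_zero_iff.mp h).1
    have hemb : hyperplaneEmbedding k m x = Projectivization.mk k (Fin.snoc x.rep 0) hsne := by
      conv_lhs => rw [← Projectivization.mk_rep x]
      rw [hyperplaneEmbedding, Projectivization.map_mk]
      exact mk_congr rfl _
    have hx' : evalVec F x.rep ≠ 0 := hx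
    have hW : evalVec (coneExtension F h1) (Fin.snoc x.rep 0) =
        Fin.snoc (evalVec F x.rep) 0 := by
      rw [evalVec_coneExtension, zero_mul]
    have hWne : evalVec (coneExtension F h1) (Fin.snoc x.rep 0) ≠ 0 := by
      rw [hW]
      exact fun h => hx' (snoc_eq_zero_iff.mp h).1
    constructor
    · rw [hemb]
      exact (defined_mk _ hsne).mpr hWne
    · rw [hemb, app_mk _ hsne hWne]
      have hFapp : F.app x = Projectivization.mk k (evalVec F x.rep) hx' :=
        app_eq_mk_evalVec_rep F x hx'
      rw [hFapp, hyperplaneEmbedding, Projectivization.map_mk]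
      have hval : evalVec (coneExtension F h1) (Fin.snoc x.rep 0) =
          extendZeroLinear k m (evalVec F x.rep) := by
        rw [hW]; rfl
      exact mk_congr hval _
  · -- Part 3: lines through p map to lines through p
    refine ⟨lastCoordPoint k m, fun x _ => ?_⟩
    have hsubp : (lastCoordPoint k m).submodule =
        Submodule.span k {(Pi.single (Fin.last (m + 1)) 1 : Fin (m + 2) → k)} :=
      submodule_mk _ _
    obtain ⟨vv, tt, hsnoc⟩ : ∃ vv tt, Fin.snoc vv tt = x.rep :=
      ⟨_, _, Fin.snoc_init_self x.rep⟩
    have key : ∀ z ∈ lineThrough k (lastCoordPoint k m) x, (coneExtension F h1).Defined z →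
        ((coneExtension F h1).app z).submodule ≤
          Submodule.span k {(Pi.single (Fin.last (m + 1)) 1 : Fin (m + 2) → k)} ⊔
            Submodule.span k {(Fin.snoc (evalVec F vv) 0 : Fin (m + 2) → k)} := by
      intro z hz hd
      have h0 : z.rep ∈ (lastCoordPoint k m).submodule ⊔ x.submodule := by
        apply hz
        rw [Projectivization.submodule_eq]
        exact Submodule.mem_span_singleton_self _
      rw [hsubp, Projectivization.submodule_eq x] at h0
      obtain ⟨y1, hy1, y2, hy2, hsum⟩ := Submodule.mem_sup.mp h0
      obtain ⟨α, rfl⟩ := Submodule.mem_span_singleton.mp hy1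
      obtain ⟨β, rfl⟩ := Submodule.mem_span_singleton.mp hy2
      have hdecomp : z.rep = Fin.snoc (β • vv) (α + β * tt) := by
        rw [← hsum]
        funext i
        refine Fin.lastCases ?_ (fun j => ?_) i
        · simp [← hsnoc]
        · simp [← hsnoc, Pi.single_eq_of_ne (Fin.castSucc_lt_last j).ne]
      have hV : evalVec (coneExtension F h1) z.rep =
          β ^ F.deg • (Fin.snoc (evalVec F vv) 0 : Fin (m + 2) → k) +
            ((α + β * tt) * (β * vv 0) ^ (F.deg - 1)) •
              (Pi.single (Fin.last (m + 1)) 1 : Fin (m + 2) → k) := by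
        rw [hdecomp, evalVec_coneExtension, evalVec_smul]
        funext i
        refine Fin.lastCases ?_ (fun j => ?_) i
        · simp
        · simp [Pi.single_eq_of_ne (Fin.castSucc_lt_last j).ne]
      have hd' : evalVec (coneExtension F h1) z.rep ≠ 0 := hd
      rw [app_eq_mk_evalVec_rep _ z hd', submodule_mk, Submodule.span_le,
        Set.singleton_subset_iff, hV]
      exact Submodule.add_mem _
        (Submodule.mem_sup_right (Submodule.smul_mem _ _ (Submodule.mem_span_singleton_self _)))
        (Submodule.mem_sup_left (Submodule.smul_mem _ _ (Submodule.mem_span_singleton_self _)))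
    by_cases hw : evalVec F vv = 0
    · -- degenerate case: image is the point p itself
      have hy0 : (Pi.single (0 : Fin (m + 2)) 1 : Fin (m + 2) → k) ≠ 0 := by
        intro h
        have := congrFun h 0
        simp at this
      refine ⟨Projectivization.mk k (Pi.single 0 1) hy0, ?_, ?_⟩
      · intro hcon
        obtain ⟨c, hc⟩ := (mk_eq_mk_iff k _ _ _ _).mp hcon
        have := congrFun hc 0
        have hne0 : (0 : Fin (m + 2)) ≠ Fin.last (m + 1) := Fin.last_pos.ne
        rw [Units.smul_def, Pi.smul_apply, smul_eq_mul, Pi.single_eq_of_ne hne0,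
          mul_zero, Pi.single_eq_same] at this
        exact one_ne_zero this.symm
      · intro z hz hd
        have h2 := key z hz hd
        rw [hw] at h2
        have h3 : (Fin.snoc (0 : Fin (m + 1) → k) 0 : Fin (m + 2) → k) = 0 :=
          snoc_eq_zero_iff.mpr ⟨rfl, rfl⟩
        rw [h3, Submodule.span_zero_singleton, sup_bot_eq] at h2
        show ((coneExtension F h1).app z).submodule ≤ _
        rw [hsubp]
        exact h2.trans le_sup_left
    · -- main case
      have hsne : (Fin.snoc (evalVec F vv) 0 : Fin (m + 2) → k) ≠ 0 :=
        fun h => hw (snoc_eq_zero_iff.mp h).1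
      refine ⟨Projectivization.mk k (Fin.snoc (evalVec F vv) 0) hsne, ?_, ?_⟩
      · intro hcon
        obtain ⟨c, hc⟩ := (mk_eq_mk_iff k _ _ _ _).mp hcon
        apply hw
        funext j
        have := congrFun hc (Fin.castSucc j)
        rw [Units.smul_def, Pi.smul_apply, smul_eq_mul,
          Pi.single_eq_of_ne (Fin.castSucc_lt_last j).ne, mul_zero, Fin.snoc_castSucc] at this
        exact this.symm
      · intro z hz hd
        have h2 := key z hz hd
        show ((coneExtension F h1).app z).submodule ≤ _
        rw [hsubp, submodule_mk]
        exact h2
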